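/- Let R_T be a rotation matrix in SO(3) and R̄ a rotation matrix with d/dt R̄ = R̄·ω̂ where ω = k·e_R(R̄ᵀR_T), k > 0, and R_T is constant. Then d/dt φ(R̄ᵀR_T) = −2k·‖e_R(R̄ᵀR_T)‖², where φ(R) := tr(I₃ − R) and e_R(R) := ((1/2)(R − Rᵀ))^∨. -/

import Mathlib

open Matrix BigOperators

def SO3 (R : Matrix (Fin 3) (Fin 3) ℝ) : Prop := Rᵀ * R = 1 ∧ R.det = 1

noncomputable def phi (R : Matrix (Fin 3) (Fin 3) ℝ) : ℝ := Matrix.trace (1 - R)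

noncomputable def hat (a : Fin 3 → ℝ) : Matrix (Fin 3) (Fin 3) ℝ :=
  !![0, -a 2, a 1; a 2, 0, -a 0; -a 1, a 0, 0]

noncomputable def sk (M : Matrix (Fin 3) (Fin 3) ℝ) : Matrix (Fin 3) (Fin 3) ℝ :=
  (1 / 2 : ℝ) • (M - Mᵀ)

noncomputable def vee (M : Matrix (Fin 3) (Fin 3) ℝ) : Fin 3 → ℝ := ![M 2 1, M 0 2, M 1 0]

lemma hat00 (a : Fin 3 → ℝ) : hat a 0 0 = 0 := by simp [hat]
lemma hat01 (a : Fin 3 → ℝ) : hat a 0 1 = -a 2 := by simp [hat]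
lemma hat02 (a : Fin 3 → ℝ) : hat a 0 2 = a 1 := by simp [hat]
lemma hat10 (a : Fin 3 → ℝ) : hat a 1 0 = a 2 := by simp [hat]
lemma hat11 (a : Fin 3 → ℝ) : hat a 1 1 = 0 := by simp [hat]
lemma hat12 (a : Fin 3 → ℝ) : hat a 1 2 = -a 0 := by simp [hat]
lemma hat20 (a : Fin 3 → ℝ) : hat a 2 0 = -a 1 := by simp [hat]
lemma hat21 (a : Fin 3 → ℝ) : hat a 2 1 = a 0 := by simp [hat]
lemma hat22 (a : Fin 3 → ℝ) : hat a 2 2 = 0 := by simp [hat]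

lemma sk_apply (M : Matrix (Fin 3) (Fin 3) ℝ) (i j : Fin 3) :
    sk M i j = (1 / 2 : ℝ) * (M i j - M j i) := by
  simp [sk, Matrix.smul_apply, Matrix.sub_apply, Matrix.transpose_apply]

lemma vee0 (M : Matrix (Fin 3) (Fin 3) ℝ) : vee M 0 = M 2 1 := rfl
lemma vee1 (M : Matrix (Fin 3) (Fin 3) ℝ) : vee M 1 = M 0 2 := rfl
lemma vee2 (M : Matrix (Fin 3) (Fin 3) ℝ) : vee M 2 = M 1 0 := rfl

set_option maxHeartbeats 1000000

/-- Derivative of the orientation error energy under the visual motion observer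
update law `d/dt R̄ = R̄ ω̂` with `ω = k e_R(R̄ᵀ R_T)` for a static target `R_T`. -/
theorem stmt11 (RT : Matrix (Fin 3) (Fin 3) ℝ) (hRT : SO3 RT)
    (Rb : ℝ → Matrix (Fin 3) (Fin 3) ℝ) (hRb : ∀ t, SO3 (Rb t)) (k : ℝ) (hk : 0 < k)
    (hder : ∀ t i j, HasDerivAt (fun s => Rb s i j)
      ((Rb t * hat (k • vee (sk ((Rb t)ᵀ * RT)))) i j) t) (t : ℝ) :
    HasDerivAt (fun s => phi ((Rb s)ᵀ * RT))
      (-(2 * k) * ∑ i, (vee (sk ((Rb t)ᵀ * RT)) i) ^ 2) t := by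
  set D := Rb t * hat (k • vee (sk ((Rb t)ᵀ * RT))) with hD
  have hphi : ∀ s, phi ((Rb s)ᵀ * RT)
      = (3 : ℝ) - ∑ i : Fin 3, ∑ j : Fin 3, Rb s j i * RT j i := by
    intro s
    simp only [phi, Matrix.trace, Matrix.diag, Matrix.sub_apply, Matrix.one_apply_eq,
      Matrix.mul_apply, Matrix.transpose_apply, Fin.sum_univ_three]
    ring
  have hsum : HasDerivAt (fun s => (3 : ℝ) - ∑ i : Fin 3, ∑ j : Fin 3, Rb s j i * RT j i)
      (-(∑ i : Fin 3, ∑ j : Fin 3, D j i * RT j i)) t := by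
    apply HasDerivAt.const_sub
    apply HasDerivAt.fun_sum
    intro i _
    apply HasDerivAt.fun_sum
    intro j _
    exact (hder t j i).mul_const _
  have hval : -(∑ i : Fin 3, ∑ j : Fin 3, D j i * RT j i)
      = -(2 * k) * ∑ i, (vee (sk ((Rb t)ᵀ * RT)) i) ^ 2 := by
    simp only [hD, Matrix.mul_apply, Fin.sum_univ_three,
      hat00, hat01, hat02, hat10, hat11, hat12, hat20, hat21, hat22,
      vee0, vee1, vee2, sk_apply, Pi.smul_apply, smul_eq_mul, Matrix.transpose_apply]
    ring
  have h2 := hsum.congr_deriv hval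
  exact h2.congr_of_eventuallyEq (Filter.Eventually.of_forall fun s => hphi s)
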